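/- Let a, b, c be positive integers with gcd(a, b, c) = 1, and set g₁ = gcd(b, c), g₂ = gcd(a, c), g₃ = gcd(a, b) (these are pairwise coprime, g₂·g₃ divides a, g₁·g₃ divides b, and g₁·g₂ divides c). Let i, j, k be natural numbers with i < g₃, j < g₂, k < g₁ and i·c ≡ n (mod g₃), j·b ≡ n (mod g₂), k·a ≡ n (mod g₁), and let n and m be integers with n = i·c + j·b + k·a + g₁·g₂·g₃·m. Then the number of triples (x₁, x₂, x₃) ∈ ℕ³ with a·x₁ + b·x₂ + c·x₃ = n equals the number of triples (x₁, x₂, x₃) ∈ ℕ³ with (a/(g₂g₃))·x₁ + (b/(g₁g₃))·x₂ + (c/(g₁g₂))·x₃ = m. -/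

import Mathlib

private lemma aux_residue (g r x : ℕ) (hr : r < g) (hdvd : (g:ℤ) ∣ (x:ℤ) - (r:ℤ)) :
    ∃ y : ℕ, x = r + g * y := by
  obtain ⟨t, ht⟩ := hdvd
  have hg : (0:ℤ) < g := by exact_mod_cast Nat.pos_of_ne_zero (by omega)
  have ht0 : 0 ≤ t := by
    by_contra h
    push_neg at h
    have h1 : t ≤ -1 := by omega
    have h2 : (g:ℤ) * t ≤ (g:ℤ) * (-1) := mul_le_mul_of_nonneg_left h1 (le_of_lt hg)
    have hx0 : (0:ℤ) ≤ (x:ℤ) := Int.natCast_nonneg x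
    have hrg : (r:ℤ) < g := by exact_mod_cast hr
    omega
  refine ⟨t.toNat, ?_⟩
  have h3 : (x:ℤ) = (r:ℤ) + (g:ℤ) * (t.toNat : ℤ) := by
    rw [Int.toNat_of_nonneg ht0]; omega
  exact_mod_cast h3

theorem denumerant_reduction_pairwise_coprime (a b c : ℕ)
    (ha : 0 < a) (hb : 0 < b) (hc : 0 < c)
    (habc : Nat.gcd (Nat.gcd a b) c = 1) (n m : ℤ) (i j k : ℕ)
    (hi : i < Nat.gcd a b) (hj : j < Nat.gcd a c) (hk : k < Nat.gcd b c)
    (hicong : (i * c : ℤ) ≡ n [ZMOD (Nat.gcd a b : ℤ)])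
    (hjcong : (j * b : ℤ) ≡ n [ZMOD (Nat.gcd a c : ℤ)])
    (hkcong : (k * a : ℤ) ≡ n [ZMOD (Nat.gcd b c : ℤ)])
    (hnm : n = i * c + j * b + k * a +
      (Nat.gcd b c : ℤ) * (Nat.gcd a c : ℤ) * (Nat.gcd a b : ℤ) * m) :
    Nat.card {x : ℕ × ℕ × ℕ //
        (a : ℤ) * x.1 + (b : ℤ) * x.2.1 + (c : ℤ) * x.2.2 = n} =
      Nat.card {x : ℕ × ℕ × ℕ //
        ((a / (Nat.gcd a c * Nat.gcd a b) : ℕ) : ℤ) * x.1 +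
          ((b / (Nat.gcd b c * Nat.gcd a b) : ℕ) : ℤ) * x.2.1 +
          ((c / (Nat.gcd b c * Nat.gcd a c) : ℕ) : ℤ) * x.2.2 = m} := by
  set g₁ := Nat.gcd b c with hg₁
  set g₂ := Nat.gcd a c with hg₂
  set g₃ := Nat.gcd a b with hg₃
  have hco : ∀ d : ℕ, d ∣ a → d ∣ b → d ∣ c → d = 1 := fun d hda hdb hdc =>
    Nat.dvd_one.mp (habc ▸ Nat.dvd_gcd (Nat.dvd_gcd hda hdb) hdc)
  have hco1a : Nat.Coprime g₁ a :=
    hco _ (Nat.gcd_dvd_right _ _) ((Nat.gcd_dvd_left _ _).trans (Nat.gcd_dvd_left b c))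
      ((Nat.gcd_dvd_left _ _).trans (Nat.gcd_dvd_right b c))
  have hco2b : Nat.Coprime g₂ b :=
    hco _ ((Nat.gcd_dvd_left _ _).trans (Nat.gcd_dvd_left a c)) (Nat.gcd_dvd_right _ _)
      ((Nat.gcd_dvd_left _ _).trans (Nat.gcd_dvd_right a c))
  have hco3c : Nat.Coprime g₃ c :=
    hco _ ((Nat.gcd_dvd_left _ _).trans (Nat.gcd_dvd_left a b))
      ((Nat.gcd_dvd_left _ _).trans (Nat.gcd_dvd_right a b)) (Nat.gcd_dvd_right _ _)
  have hco23 : Nat.Coprime g₂ g₃ :=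
    hco _ ((Nat.gcd_dvd_left _ _).trans (Nat.gcd_dvd_left a c))
      ((Nat.gcd_dvd_right _ _).trans (Nat.gcd_dvd_right a b))
      ((Nat.gcd_dvd_left _ _).trans (Nat.gcd_dvd_right a c))
  have hco13 : Nat.Coprime g₁ g₃ :=
    hco _ ((Nat.gcd_dvd_right _ _).trans (Nat.gcd_dvd_left a b))
      ((Nat.gcd_dvd_left _ _).trans (Nat.gcd_dvd_left b c))
      ((Nat.gcd_dvd_left _ _).trans (Nat.gcd_dvd_right b c))
  have hco12 : Nat.Coprime g₁ g₂ :=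
    hco _ ((Nat.gcd_dvd_right _ _).trans (Nat.gcd_dvd_left a c))
      ((Nat.gcd_dvd_left _ _).trans (Nat.gcd_dvd_left b c))
      ((Nat.gcd_dvd_left _ _).trans (Nat.gcd_dvd_right b c))
  have hA : g₂ * g₃ ∣ a := hco23.mul_dvd_of_dvd_of_dvd (Nat.gcd_dvd_left a c) (Nat.gcd_dvd_left a b)
  have hB : g₁ * g₃ ∣ b := hco13.mul_dvd_of_dvd_of_dvd (Nat.gcd_dvd_left b c) (Nat.gcd_dvd_right a b)
  have hC : g₁ * g₂ ∣ c := hco12.mul_dvd_of_dvd_of_dvd (Nat.gcd_dvd_right b c) (Nat.gcd_dvd_right a c)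
  set a' := a / (g₂ * g₃) with ha'
  set b' := b / (g₁ * g₃) with hb'
  set c' := c / (g₁ * g₂) with hc'
  have haZ : (a : ℤ) = (a' : ℤ) * g₂ * g₃ := by
    have h := Nat.div_mul_cancel hA
    have h' : (a' : ℤ) * ((g₂:ℤ) * g₃) = a := by exact_mod_cast congrArg (Nat.cast : ℕ → ℤ) h
    linear_combination -h'
  have hbZ : (b : ℤ) = (b' : ℤ) * g₁ * g₃ := by
    have h := Nat.div_mul_cancel hB
    have h' : (b' : ℤ) * ((g₁:ℤ) * g₃) = b := by exact_mod_cast congrArg (Nat.cast : ℕ → ℤ) h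
    linear_combination -h'
  have hcZ : (c : ℤ) = (c' : ℤ) * g₁ * g₂ := by
    have h := Nat.div_mul_cancel hC
    have h' : (c' : ℤ) * ((g₁:ℤ) * g₂) = c := by exact_mod_cast congrArg (Nat.cast : ℕ → ℤ) h
    linear_combination -h'
  have hGpos : (0:ℤ) < (g₁:ℤ) * g₂ * g₃ := by
    have h1 : 0 < g₁ := Nat.gcd_pos_of_pos_left _ hb
    have h2 : 0 < g₂ := Nat.gcd_pos_of_pos_left _ ha
    have h3 : 0 < g₃ := Nat.gcd_pos_of_pos_left _ ha
    positivity
  -- the bijection from reduced solutions to original solutions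
  set f : {x : ℕ × ℕ × ℕ // (a' : ℤ) * x.1 + (b' : ℤ) * x.2.1 + (c' : ℤ) * x.2.2 = m} →
      {x : ℕ × ℕ × ℕ // (a : ℤ) * x.1 + (b : ℤ) * x.2.1 + (c : ℤ) * x.2.2 = n} :=
    fun y => ⟨(k + g₁ * y.1.1, j + g₂ * y.1.2.1, i + g₃ * y.1.2.2), by
      obtain ⟨⟨y₁, y₂, y₃⟩, hy⟩ := y
      simp only
      push_cast
      linear_combination ((g₁:ℤ) * g₂ * g₃) * hy - hnm + ((g₁:ℤ) * y₁) * haZ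
        + ((g₂:ℤ) * y₂) * hbZ + ((g₃:ℤ) * y₃) * hcZ⟩ with hf
  have hbij : Function.Bijective f := by
    constructor
    · rintro ⟨⟨y₁, y₂, y₃⟩, hy⟩ ⟨⟨z₁, z₂, z₃⟩, hz⟩ h
      simp only [hf, Subtype.mk.injEq, Prod.mk.injEq] at h
      have h1 : 0 < g₁ := Nat.gcd_pos_of_pos_left _ hb
      have h2 : 0 < g₂ := Nat.gcd_pos_of_pos_left _ ha
      have h3 : 0 < g₃ := Nat.gcd_pos_of_pos_left _ ha
      obtain ⟨e1, e2, e3⟩ := h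
      have : y₁ = z₁ := Nat.eq_of_mul_eq_mul_left h1 (by omega)
      have : y₂ = z₂ := Nat.eq_of_mul_eq_mul_left h2 (by omega)
      have : y₃ = z₃ := Nat.eq_of_mul_eq_mul_left h3 (by omega)
      subst_vars
      rfl
    · rintro ⟨⟨x₁, x₂, x₃⟩, hx⟩
      simp only at hx
      -- divisibility facts on x
      have hd1b : (g₁:ℤ) ∣ (b:ℤ) := Int.natCast_dvd_natCast.mpr (Nat.gcd_dvd_left b c)
      have hd1c : (g₁:ℤ) ∣ (c:ℤ) := Int.natCast_dvd_natCast.mpr (Nat.gcd_dvd_right b c)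
      have hd2a : (g₂:ℤ) ∣ (a:ℤ) := Int.natCast_dvd_natCast.mpr (Nat.gcd_dvd_left a c)
      have hd2c : (g₂:ℤ) ∣ (c:ℤ) := Int.natCast_dvd_natCast.mpr (Nat.gcd_dvd_right a c)
      have hd3a : (g₃:ℤ) ∣ (a:ℤ) := Int.natCast_dvd_natCast.mpr (Nat.gcd_dvd_left a b)
      have hd3b : (g₃:ℤ) ∣ (b:ℤ) := Int.natCast_dvd_natCast.mpr (Nat.gcd_dvd_right a b)
      -- x₁ ≡ k mod g₁
      have hdk : (g₁:ℤ) ∣ ((x₁:ℤ) - k) := by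
        have h1 : (g₁:ℤ) ∣ ((x₁:ℤ) - k) * a := by
          have hnk : (g₁:ℤ) ∣ n - (k:ℤ) * a := hkcong.dvd
          obtain ⟨u, hu⟩ := hd1b
          obtain ⟨v, hv⟩ := hd1c
          obtain ⟨w, hw⟩ := hnk
          refine ⟨w - u * x₂ - v * x₃, ?_⟩
          linear_combination hx + hw - (x₂:ℤ) * hu - (x₃:ℤ) * hv
        exact (Nat.isCoprime_iff_coprime.mpr hco1a).dvd_of_dvd_mul_right h1
      have hdj : (g₂:ℤ) ∣ ((x₂:ℤ) - j) := by
        have h1 : (g₂:ℤ) ∣ ((x₂:ℤ) - j) * b := by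
          have hnj : (g₂:ℤ) ∣ n - (j:ℤ) * b := hjcong.dvd
          obtain ⟨u, hu⟩ := hd2a
          obtain ⟨v, hv⟩ := hd2c
          obtain ⟨w, hw⟩ := hnj
          refine ⟨w - u * x₁ - v * x₃, ?_⟩
          linear_combination hx + hw - (x₁:ℤ) * hu - (x₃:ℤ) * hv
        exact (Nat.isCoprime_iff_coprime.mpr hco2b).dvd_of_dvd_mul_right h1
      have hdi : (g₃:ℤ) ∣ ((x₃:ℤ) - i) := by
        have h1 : (g₃:ℤ) ∣ ((x₃:ℤ) - i) * c := by
          have hni : (g₃:ℤ) ∣ n - (i:ℤ) * c := hicong.dvd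
          obtain ⟨u, hu⟩ := hd3a
          obtain ⟨v, hv⟩ := hd3b
          obtain ⟨w, hw⟩ := hni
          refine ⟨w - u * x₁ - v * x₂, ?_⟩
          linear_combination hx + hw - (x₁:ℤ) * hu - (x₂:ℤ) * hv
        exact (Nat.isCoprime_iff_coprime.mpr hco3c).dvd_of_dvd_mul_right h1
      obtain ⟨y₁, hy₁⟩ := aux_residue g₁ k x₁ hk hdk
      obtain ⟨y₂, hy₂⟩ := aux_residue g₂ j x₂ hj hdj
      obtain ⟨y₃, hy₃⟩ := aux_residue g₃ i x₃ hi hdi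
      have hy : (a' : ℤ) * y₁ + (b' : ℤ) * y₂ + (c' : ℤ) * y₃ = m := by
        have hmain : ((g₁:ℤ) * g₂ * g₃) * ((a' : ℤ) * y₁ + (b' : ℤ) * y₂ + (c' : ℤ) * y₃)
            = ((g₁:ℤ) * g₂ * g₃) * m := by
          have hx1 : (x₁ : ℤ) = k + g₁ * y₁ := by exact_mod_cast congrArg (Nat.cast : ℕ → ℤ) hy₁
          have hx2 : (x₂ : ℤ) = j + g₂ * y₂ := by exact_mod_cast congrArg (Nat.cast : ℕ → ℤ) hy₂
          have hx3 : (x₃ : ℤ) = i + g₃ * y₃ := by exact_mod_cast congrArg (Nat.cast : ℕ → ℤ) hy₃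
          linear_combination hx + hnm - (a:ℤ) * hx1 - (b:ℤ) * hx2 - (c:ℤ) * hx3
            - ((g₁:ℤ) * y₁) * haZ - ((g₂:ℤ) * y₂) * hbZ - ((g₃:ℤ) * y₃) * hcZ
        exact mul_left_cancel₀ (ne_of_gt hGpos) hmain
      refine ⟨⟨(y₁, y₂, y₃), hy⟩, ?_⟩
      simp only [hf]
      exact Subtype.ext (by simp [hy₁, hy₂, hy₃])
  exact (Nat.card_congr (Equiv.ofBijective f hbij)).symm
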